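/- Let G be a group and A, B ≤ G. Suppose {gᵢ} ⊆ G is such that the subgroups {B^{gᵢ}} contain a representative of every N_G(A)-conjugacy class of conjugates B^g that are contained in A. Then the subgroups {A^{gᵢ⁻¹}} contain a representative of every N_G(B)-conjugacy class of conjugates A^g that contain B. -/

import Mathlib

private lemma conj_map_map {G : Type*} [Group G] (K : Subgroup G) (a b : G) :
    (K.map (MulAut.conj b).toMonoidHom).map (MulAut.conj a).toMonoidHom
      = K.map (MulAut.conj (a * b)).toMonoidHom := by
  rw [Subgroup.map_map]
  congr 1
  ext x
  simp [mul_assoc]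

private lemma conj_map_one {G : Type*} [Group G] (K : Subgroup G) :
    K.map (MulAut.conj (1 : G)).toMonoidHom = K := by
  ext x; simp

private lemma conj_map_self {G : Type*} [Group G] {K : Subgroup G} {n : G}
    (hn : n ∈ Subgroup.normalizer (K : Set G)) : K.map (MulAut.conj n).toMonoidHom = K := by
  ext y
  simp only [Subgroup.mem_map, MulEquiv.coe_toMonoidHom, MulAut.conj_apply]
  constructor
  · rintro ⟨k, hk, rfl⟩
    exact (Subgroup.mem_normalizer_iff.mp hn k).mp hk
  · intro hy
    exact ⟨n⁻¹ * y * n, by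
      have := (Subgroup.mem_normalizer_iff.mp ((Subgroup.normalizer (K : Set G)).inv_mem hn) y).mp hy
      simpa [mul_assoc] using this, by group⟩

/-- If the subgroups `B^{gᵢ}` (here `X^g = g⁻¹Xg`) meet every `N_G(A)`-class of
conjugates of `B` contained in `A`, then the subgroups `A^{gᵢ⁻¹}` meet every
`N_G(B)`-class of conjugates of `A` containing `B`. -/
theorem stmt14 {G : Type*} [Group G] (A B : Subgroup G) {ι : Type*} (g : ι → G)
    (hyp : ∀ x : G, B.map (MulAut.conj x⁻¹).toMonoidHom ≤ A →
      ∃ i, ∃ n ∈ Subgroup.normalizer (A : Set G),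
        B.map (MulAut.conj (x * n)⁻¹).toMonoidHom = B.map (MulAut.conj (g i)⁻¹).toMonoidHom) :
    ∀ x : G, B ≤ A.map (MulAut.conj x⁻¹).toMonoidHom →
      ∃ i, ∃ m ∈ Subgroup.normalizer (B : Set G),
        A.map (MulAut.conj (x * m)⁻¹).toMonoidHom
          = A.map (MulAut.conj ((g i)⁻¹)⁻¹).toMonoidHom := by
  intro x hx
  have hx' : B.map (MulAut.conj (x⁻¹)⁻¹).toMonoidHom ≤ A := by
    intro y hy
    rw [Subgroup.mem_map] at hy
    obtain ⟨b, hb, rfl⟩ := hy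
    have hmem := hx hb
    rw [Subgroup.mem_map] at hmem
    obtain ⟨a, ha, hab⟩ := hmem
    simp only [MulEquiv.coe_toMonoidHom, MulAut.conj_apply] at hab ⊢
    have : x⁻¹⁻¹ * b * x⁻¹⁻¹⁻¹ = a := by rw [← hab]; group
    rwa [this]
  obtain ⟨i, n, hn, heq⟩ := hyp x⁻¹ hx'
  have h2 : B = B.map (MulAut.conj (x⁻¹ * n * (g i)⁻¹)).toMonoidHom := by
    have h := congrArg (Subgroup.map (MulAut.conj (x⁻¹ * n)).toMonoidHom) heq
    rw [conj_map_map, conj_map_map, mul_inv_cancel, conj_map_one] at h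
    exact h
  refine ⟨i, x⁻¹ * n * (g i)⁻¹, ?_, ?_⟩
  · rw [Subgroup.mem_normalizer_iff]
    intro h
    constructor
    · intro hh
      rw [h2]
      exact ⟨h, hh, by simp [mul_assoc]⟩
    · intro hh
      rw [h2, Subgroup.mem_map] at hh
      obtain ⟨b, hb, hb'⟩ := hh
      simp only [MulEquiv.coe_toMonoidHom, MulAut.conj_apply] at hb'
      rwa [mul_left_cancel (mul_right_cancel hb')] at hb
  · have hxm : x * (x⁻¹ * n * (g i)⁻¹) = n * (g i)⁻¹ := by group
    rw [hxm, inv_inv]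
    have : (n * (g i)⁻¹)⁻¹ = g i * n⁻¹ := by group
    rw [this, ← conj_map_map, conj_map_self ((Subgroup.normalizer (A : Set G)).inv_mem hn)]
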